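/- Let N ≥ 1, let K be a nonempty subset of ℒ(𝒳^N) and let P : K → ℝ. Define H := {MuHy^N(f|·) : f ∈ K} ⊆ ℒ(𝒩^N), and for g ∈ H define Q(g) := sup{P(f) : f ∈ K, MuHy^N(f|·) = g} ∈ ℝ ∪ {+∞}. Then there exists a coherent exchangeable lower prevision on ℒ(𝒳^N) that dominates P on K (i.e., whose value at every f ∈ K is ≥ P(f)) if and only if Q is real-valued on H and avoids sure loss, i.e., for every n ≥ 0, all g₁,…,g_n ∈ H and all real λ₁,…,λ_n ≥ 0: max_{m∈𝒩^N} Σ_{k=1}^n λ_k (g_k(m) − Q(g_k)) ≥ 0. -/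

import Mathlib

open Finset Filter Topology

/-- A coherent lower prevision on the gambles over a finite nonempty space `Ω`. -/
def LowerPrevCoherent {Ω : Type*} [Fintype Ω] [Nonempty Ω] (P : (Ω → ℝ) → ℝ) : Prop :=
  (∀ f : Ω → ℝ, sInf (Set.range f) ≤ P f) ∧
  (∀ (f : Ω → ℝ) (l : ℝ), 0 ≤ l → P (fun ω => l * f ω) = l * P f) ∧
  (∀ f g : Ω → ℝ, P f + P g ≤ P (f + g))

/-- A linear prevision on the gambles over a finite nonempty space `Ω`. -/
def LinearPrevision {Ω : Type*} [Fintype Ω] [Nonempty Ω] (P : (Ω → ℝ) → ℝ) : Prop :=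
  (∀ f g : Ω → ℝ, P (f + g) = P f + P g) ∧
  (∀ (l : ℝ) (f : Ω → ℝ), P (fun ω => l * f ω) = l * P f) ∧
  (∀ f : Ω → ℝ, (∀ ω, 0 ≤ f ω) → 0 ≤ P f) ∧
  P (fun _ => 1) = 1

/-- Exchangeability of a lower prevision on gambles on `X^N`:
`P (πf − f) ≥ 0` for every gamble `f` and every permutation `π`. -/
def Exchangeable {X : Type*} {N : ℕ} (P : ((Fin N → X) → ℝ) → ℝ) : Prop :=
  ∀ (f : (Fin N → X) → ℝ) (π : Equiv.Perm (Fin N)),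
    0 ≤ P (fun x => f (fun k => x (π k)) - f x)

/-- The set of count vectors `𝒩^n`. -/
abbrev CVec (X : Type*) [Fintype X] (n : ℕ) : Type _ := {m : X → ℕ // ∑ x, m x = n}

noncomputable instance {X : Type*} [Fintype X] [DecidableEq X] (n : ℕ) : Fintype (CVec X n) := by
  have key : ∀ (m : CVec X n) (x : X), m.1 x < n + 1 := by
    intro m x
    have h1 : m.1 x ≤ ∑ y, m.1 y :=
      Finset.single_le_sum (fun i _ => Nat.zero_le _) (Finset.mem_univ x)
    have h2 := m.2
    omega
  exact Fintype.ofInjective (fun m : CVec X n => fun x => (⟨m.1 x, key m x⟩ : Fin (n+1)))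
    (fun a b hab => Subtype.ext (funext fun x => congrArg Fin.val (congrFun hab x)))

instance {X : Type*} [Fintype X] [DecidableEq X] [Nonempty X] (n : ℕ) :
    Nonempty (CVec X n) :=
  ⟨⟨fun x => if x = Classical.arbitrary X then n else 0, by simp⟩⟩

/-- The counting map `T^n : X^n → 𝒩^n`. -/
def countMap {X : Type*} [Fintype X] [DecidableEq X] (n : ℕ) (z : Fin n → X) : CVec X n :=
  ⟨fun x => (Finset.univ.filter fun k => z k = x).card, by
    have h := Finset.card_eq_sum_card_fiberwise (f := z) (s := Finset.univ) (t := Finset.univ)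
      (fun k _ => Finset.mem_univ (z k))
    simpa using h.symm⟩

/-- `ν(m) = n!/∏ₓ mₓ!` for a count vector `m ∈ 𝒩^n`. -/
def nu {X : Type*} [Fintype X] {n : ℕ} (m : CVec X n) : ℕ :=
  Nat.multinomial Finset.univ m.1

/-- `ν(μ − m)`, which is `0` unless `m ≤ μ` componentwise. -/
def nuSub {X : Type*} [Fintype X] {n k : ℕ} (μ : CVec X (n + k)) (m : CVec X n) : ℕ :=
  if ∀ x, m.1 x ≤ μ.1 x then Nat.multinomial Finset.univ (fun x => μ.1 x - m.1 x) else 0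

/-- The multiple hyper-geometric prevision `MuHy^n(f|m) = (1/ν(m)) ∑_{z∈[m]} f(z)`. -/
noncomputable def MuHy {X : Type*} [Fintype X] [DecidableEq X] {n : ℕ}
    (f : (Fin n → X) → ℝ) (m : CVec X n) : ℝ :=
  (∑ z ∈ Finset.univ.filter fun z : Fin n → X => countMap n z = m, f z) / (nu m : ℝ)

/-- The `X`-simplex `Σ_X`, as a subtype of `X → ℝ`. -/
abbrev SimplexPt (X : Type*) [Fintype X] : Type _ :=
  {θ : X → ℝ // (∀ x, 0 ≤ θ x) ∧ ∑ x, θ x = 1}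

/-- The Bernstein basis polynomial `B_m(θ) = ν(m) ∏ₓ θₓ^{mₓ}`. -/
noncomputable def Bern {X : Type*} [Fintype X] {n : ℕ} (m : CVec X n) (θ : X → ℝ) : ℝ :=
  (nu m : ℝ) * ∏ x, θ x ^ m.1 x

/-- The count multinomial expectation `CoMn^n(g|θ) = ∑_m g(m) B_m(θ)`. -/
noncomputable def CoMn {X : Type*} [Fintype X] [DecidableEq X] {n : ℕ} (g : CVec X n → ℝ) (θ : X → ℝ) : ℝ :=
  ∑ m : CVec X n, g m * Bern m θ

/-- The multinomial expectation `Mn^n(f|θ) = ∑_z f(z) ∏ₓ θₓ^{Tₓ(z)}`. -/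
noncomputable def Mn {X : Type*} [Fintype X] [DecidableEq X] {n : ℕ}
    (f : (Fin n → X) → ℝ) (θ : X → ℝ) : ℝ :=
  ∑ z : Fin n → X, f z * ∏ x, θ x ^ (countMap n z).1 x

/-- `CoMn^n(g|·)` as a function on the simplex. -/
noncomputable def CoMnP {X : Type*} [Fintype X] [DecidableEq X] {n : ℕ} (g : CVec X n → ℝ)
    (θ : SimplexPt X) : ℝ :=
  CoMn g θ.1

/-- `Mn^n(f|·)` as a function on the simplex. -/
noncomputable def MnP {X : Type*} [Fintype X] [DecidableEq X] {n : ℕ}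
    (f : (Fin n → X) → ℝ) (θ : SimplexPt X) : ℝ :=
  Mn f θ.1

/-- Polynomial gambles on the simplex: the set `𝒱(Σ_X)`. -/
def IsPolyGamble {X : Type*} [Fintype X] [DecidableEq X] (p : SimplexPt X → ℝ) : Prop :=
  ∃ n : ℕ, 1 ≤ n ∧ ∃ g : CVec X n → ℝ, p = fun θ => CoMnP g θ

/-- Coherence of a functional on the linear space `𝒱(Σ_X)` of polynomial gambles. -/
def CoherentOnPoly {X : Type*} [Fintype X] [DecidableEq X] (S : (SimplexPt X → ℝ) → ℝ) : Prop :=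
  (∀ p, IsPolyGamble p → sInf (Set.range p) ≤ S p) ∧
  (∀ p, IsPolyGamble p → ∀ l : ℝ, 0 ≤ l → S (fun θ => l * p θ) = l * S p) ∧
  (∀ p q, IsPolyGamble p → IsPolyGamble q → S p + S q ≤ S (p + q))

/-- Cylindrical extension of a gamble on `X^n` to `X^{n+k}`. -/
def cylExt {X : Type*} {n k : ℕ} (f : (Fin n → X) → ℝ) : (Fin (n + k) → X) → ℝ :=
  fun z => f fun i => z (Fin.castLE (Nat.le_add_right n k) i)

/-- Time consistency of a family of lower previsions on the `X^n`. -/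
def PTimeConsistent {X : Type*} (P : ∀ n : ℕ, ((Fin n → X) → ℝ) → ℝ) : Prop :=
  ∀ n : ℕ, 1 ≤ n → ∀ (k : ℕ) (f : (Fin n → X) → ℝ), P n f = P (n + k) (cylExt f)

/-- Time consistency of a family of count lower previsions on the `𝒩^n`. -/
def QTimeConsistent {X : Type*} [Fintype X] [DecidableEq X] (Q : ∀ n : ℕ, (CVec X n → ℝ) → ℝ) : Prop :=
  ∀ n : ℕ, 1 ≤ n → ∀ (k : ℕ) (h : CVec X n → ℝ),
    Q n h = Q (n + k) (fun μ => ∑ m : CVec X n, ((nuSub μ m : ℝ) * (nu m : ℝ) / (nu μ : ℝ)) * h m)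

/-- The relative frequency vector `m/n ∈ Σ_X` of a count vector `m ∈ 𝒩^n`, `n ≥ 1`. -/
noncomputable def freqPt {X : Type*} [Fintype X] {n : ℕ} (hn : 0 < n) (m : CVec X n) :
    SimplexPt X :=
  ⟨fun x => (m.1 x : ℝ) / n,
   fun x => div_nonneg (Nat.cast_nonneg _) (Nat.cast_nonneg _),
   by
    rw [← Finset.sum_div]
    have h : (∑ x, (m.1 x : ℝ)) = (n : ℝ) := by exact_mod_cast m.2
    rw [h]
    exact div_self (Nat.cast_ne_zero.mpr hn.ne')⟩

/-- `ḡ(μ) = ∑_m (ν(m) ν(μ−m) / ν(μ)) g(m)`. -/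
noncomputable def gbar {X : Type*} [Fintype X] [DecidableEq X] {n k : ℕ}
    (g : CVec X n → ℝ) (μ : CVec X (n + k)) : ℝ :=
  ∑ m : CVec X n, ((nu m : ℝ) * (nuSub μ m : ℝ) / (nu μ : ℝ)) * g m

section Aux
set_option linter.unusedSectionVars false
open Nat
variable {X : Type*} [Fintype X] [DecidableEq X]

lemma card_fiber {n : ℕ} (z : Fin n → X) (x : X) :
    Fintype.card {k // z k = x} = (countMap n z).1 x := by
  rw [Fintype.card_subtype]; rfl

lemma countMap_comp_perm {n : ℕ} (z : Fin n → X) (π : Equiv.Perm (Fin n)) :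
    countMap n (z ∘ π) = countMap n z := by
  apply Subtype.ext; funext x
  rw [← card_fiber, ← card_fiber]
  exact Fintype.card_congr (π.subtypeEquiv fun k => Iff.rfl)

lemma nu_pos {n : ℕ} (m : CVec X n) : 0 < nu m := Nat.multinomial_pos _ _

lemma exists_perm_of_countMap_eq {n : ℕ} {z z' : Fin n → X}
    (h : countMap n z = countMap n z') : ∃ π : Equiv.Perm (Fin n), z ∘ π = z' := by
  have hcard : ∀ x, Fintype.card {k // z' k = x} = Fintype.card {k // z k = x} := by
    intro x; rw [card_fiber, card_fiber, h]
  have e : ∀ x, {k // z' k = x} ≃ {k // z k = x} := fun x => Fintype.equivOfCardEq (hcard x)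
  refine ⟨((Equiv.sigmaFiberEquiv z').symm.trans
      (Equiv.sigmaCongrRight e)).trans (Equiv.sigmaFiberEquiv z), ?_⟩
  funext i
  exact (e (z' i) ⟨i, rfl⟩).2

lemma card_perm_fiber {n : ℕ} (z z' : Fin n → X) (h : countMap n z = countMap n z') :
    Fintype.card {π : Equiv.Perm (Fin n) // z ∘ π = z'} = ∏ x, ((countMap n z).1 x)! := by
  obtain ⟨π₀, hπ₀⟩ := exists_perm_of_countMap_eq h
  have e : {π : Equiv.Perm (Fin n) // z ∘ π = z'} ≃ {π : Equiv.Perm (Fin n) // z ∘ π = z} := by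
    refine Equiv.subtypeEquiv (Equiv.mulRight π₀⁻¹) fun π => ?_
    constructor
    · intro hp; funext i
      have h1 : z (π (π₀⁻¹ i)) = z' (π₀⁻¹ i) := congrFun hp (π₀⁻¹ i)
      have h2 : z' (π₀⁻¹ i) = z i := by simpa using (congrFun hπ₀ (π₀⁻¹ i)).symm
      simpa [Equiv.coe_mulRight, Equiv.Perm.mul_apply] using h1.trans h2
    · intro hp; funext i
      have h1 : z ((π * π₀⁻¹) (π₀ i)) = z (π₀ i) :=
        congrFun hp (π₀ i)
      simp only [Equiv.Perm.mul_apply, Equiv.Perm.coe_inv, Equiv.symm_apply_apply] at h1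
      have h2 : z (π₀ i) = z' i := congrFun hπ₀ i
      simpa [h2] using h1
  rw [Fintype.card_congr e]
  have := DomMulAct.stabilizer_card z
  rw [this]
  exact Finset.prod_congr rfl fun x _ => by rw [card_fiber]

end Aux
section Aux2
set_option linter.unusedSectionVars false
open Nat
variable {X : Type*} [Fintype X] [DecidableEq X]

lemma exists_tuple [Nonempty X] : ∀ (n : ℕ) (m : CVec X n), ∃ z : Fin n → X, countMap n z = m := by
  intro n
  induction n with
  | zero =>
    intro m
    refine ⟨fun i => i.elim0, ?_⟩
    apply Subtype.ext; funext x
    have h0 : m.1 x = 0 := by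
      have := m.2
      have hle : m.1 x ≤ ∑ y, m.1 y :=
        Finset.single_le_sum (fun i _ => Nat.zero_le _) (Finset.mem_univ x)
      omega
    simp [countMap, h0]
  | succ n ih =>
    intro m
    have hx : ∃ x₀, 0 < m.1 x₀ := by
      by_contra hc
      push_neg at hc
      have : ∑ x, m.1 x = 0 := Finset.sum_eq_zero fun x _ => Nat.le_zero.mp (hc x)
      rw [m.2] at this; omega
    obtain ⟨x₀, hx₀⟩ := hx
    have hsum : ∑ x, Function.update m.1 x₀ (m.1 x₀ - 1) x = n := by
      rw [Finset.sum_update_of_mem (Finset.mem_univ x₀)]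
      have h2 : ∑ x, m.1 x = ∑ x ∈ Finset.univ \ {x₀}, m.1 x + m.1 x₀ :=
        Finset.sum_eq_sum_sdiff_singleton_add (Finset.mem_univ x₀) _
      have h3 := m.2
      omega
    obtain ⟨z', hz'⟩ := ih ⟨Function.update m.1 x₀ (m.1 x₀ - 1), hsum⟩
    refine ⟨(Fin.cons x₀ z' : Fin (n+1) → X), ?_⟩
    apply Subtype.ext; funext x
    have hcount : (countMap (n+1) (Fin.cons x₀ z' : Fin (n+1) → X)).1 x
        = (if x₀ = x then 1 else 0) + (countMap n z').1 x := by
      simp only [countMap]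
      rw [Finset.card_filter, Finset.card_filter, Fin.sum_univ_succ]
      simp [Fin.cons_zero, Fin.cons_succ]
    rw [hcount, hz']
    by_cases hx : x₀ = x
    · subst hx
      simp [Function.update_self]
      omega
    · simp [hx, Function.update_of_ne (fun h => hx h.symm)]

lemma sum_perm {n : ℕ} (f : (Fin n → X) → ℝ) (z : Fin n → X) :
    ∑ π : Equiv.Perm (Fin n), f (z ∘ π)
      = ((∏ x, ((countMap n z).1 x)! : ℕ) : ℝ) *
        ∑ z' ∈ Finset.univ.filter (fun z' : Fin n → X => countMap n z' = countMap n z), f z' := by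
  rw [← Finset.sum_fiberwise_of_maps_to (g := fun π : Equiv.Perm (Fin n) => z ∘ π)
      (t := Finset.univ.filter (fun z' : Fin n → X => countMap n z' = countMap n z))
      (fun π _ => by simp [countMap_comp_perm]) (fun π => f (z ∘ π))]
  rw [Finset.mul_sum]
  refine Finset.sum_congr rfl fun z' hz' => ?_
  have hz'' : countMap n z = countMap n z' := ((Finset.mem_filter.mp hz').2).symm
  have hcard : (Finset.univ.filter fun π : Equiv.Perm (Fin n) => z ∘ π = z').card
      = ∏ x, ((countMap n z).1 x)! := by
    rw [← Fintype.card_subtype]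
    exact card_perm_fiber z z' hz''
  calc ∑ π ∈ Finset.univ.filter fun π : Equiv.Perm (Fin n) => z ∘ π = z', f (z ∘ π)
      = ∑ π ∈ Finset.univ.filter fun π : Equiv.Perm (Fin n) => z ∘ π = z', f z' :=
        Finset.sum_congr rfl fun π hπ => by rw [(Finset.mem_filter.mp hπ).2]
    _ = ((∏ x, ((countMap n z).1 x)! : ℕ) : ℝ) * f z' := by
        rw [Finset.sum_const, hcard]; simp [mul_comm]

lemma card_atom [Nonempty X] {n : ℕ} (m : CVec X n) :
    (Finset.univ.filter fun z : Fin n → X => countMap n z = m).card = nu m := by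
  obtain ⟨z, hz⟩ := exists_tuple n m
  have key : (Fintype.card (Fin n))!
      = ∑ z' ∈ Finset.univ.filter (fun z' : Fin n → X => countMap n z' = m),
          (Finset.univ.filter fun π : Equiv.Perm (Fin n) => z ∘ π = z').card := by
    rw [← Fintype.card_perm, ← Finset.card_univ]
    exact Finset.card_eq_sum_card_fiberwise fun π _ => by simp [countMap_comp_perm, hz]
  have hfib : ∀ z' ∈ Finset.univ.filter (fun z' : Fin n → X => countMap n z' = m),
      (Finset.univ.filter fun π : Equiv.Perm (Fin n) => z ∘ π = z').card
        = ∏ x, (m.1 x)! := by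
    intro z' hz'
    have h2 : countMap n z = countMap n z' := by rw [hz, (Finset.mem_filter.mp hz').2]
    rw [← Fintype.card_subtype, card_perm_fiber z z' h2, hz]
  rw [Finset.sum_congr rfl hfib, Finset.sum_const, smul_eq_mul] at key
  have hspec : (∏ x, (m.1 x)!) * nu m = (Fintype.card (Fin n))! := by
    have := Nat.multinomial_spec Finset.univ m.1
    rw [m.2] at this
    simpa [nu] using this
  have hpos : 0 < ∏ x, (m.1 x)! := Finset.prod_pos fun x _ => Nat.factorial_pos _
  apply Nat.eq_of_mul_eq_mul_right hpos
  calc (Finset.univ.filter fun z : Fin n → X => countMap n z = m).card * ∏ x, (m.1 x)!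
      = (Fintype.card (Fin n))! := key.symm
    _ = (∏ x, (m.1 x)!) * nu m := hspec.symm
    _ = nu m * ∏ x, (m.1 x)! := mul_comm _ _

end Aux2
section Aux3
set_option linter.unusedSectionVars false
open Nat
variable {X : Type*} [Fintype X] [DecidableEq X] {n : ℕ}

lemma MuHy_add (f g : (Fin n → X) → ℝ) (m : CVec X n) :
    MuHy (fun z => f z + g z) m = MuHy f m + MuHy g m := by
  unfold MuHy; rw [← add_div, ← Finset.sum_add_distrib]

lemma MuHy_smul (l : ℝ) (f : (Fin n → X) → ℝ) (m : CVec X n) :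
    MuHy (fun z => l * f z) m = l * MuHy f m := by
  unfold MuHy; rw [← Finset.mul_sum, mul_div_assoc]

lemma MuHy_sub (f g : (Fin n → X) → ℝ) (m : CVec X n) :
    MuHy (fun z => f z - g z) m = MuHy f m - MuHy g m := by
  unfold MuHy; rw [div_sub_div_same, ← Finset.sum_sub_distrib]

lemma le_MuHy [Nonempty X] (f : (Fin n → X) → ℝ) (m : CVec X n) {c : ℝ}
    (hc : ∀ z, c ≤ f z) : c ≤ MuHy f m := by
  unfold MuHy
  rw [le_div_iff₀ (by exact_mod_cast nu_pos m)]
  have h := Finset.card_nsmul_le_sum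
    (Finset.univ.filter fun z : Fin n → X => countMap n z = m) f c (fun z _ => hc z)
  rw [card_atom m] at h
  simpa [nsmul_eq_mul, mul_comm] using h

lemma MuHy_le [Nonempty X] (f : (Fin n → X) → ℝ) (m : CVec X n) {c : ℝ}
    (hc : ∀ z, f z ≤ c) : MuHy f m ≤ c := by
  unfold MuHy
  rw [div_le_iff₀ (by exact_mod_cast nu_pos m)]
  have h := Finset.sum_le_card_nsmul
    (Finset.univ.filter fun z : Fin n → X => countMap n z = m) f c (fun z _ => hc z)
  rw [card_atom m] at h
  simpa [nsmul_eq_mul, mul_comm] using h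

lemma MuHy_perm (f : (Fin n → X) → ℝ) (π : Equiv.Perm (Fin n)) (m : CVec X n) :
    MuHy (fun z => f (fun k => z (π k))) m = MuHy f m := by
  unfold MuHy
  congr 1
  refine Finset.sum_nbij' (fun z => z ∘ ⇑π) (fun z => z ∘ ⇑π.symm) ?_ ?_ ?_ ?_ ?_
  · intro z hz
    simp only [Finset.mem_filter, Finset.mem_univ, true_and] at hz ⊢
    rw [countMap_comp_perm, hz]
  · intro z hz
    simp only [Finset.mem_filter, Finset.mem_univ, true_and] at hz ⊢
    rw [countMap_comp_perm, hz]
  · intro z _; funext k; simp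
  · intro z _; funext k; simp
  · intro z _; rfl

lemma MuHy_comp_count [Nonempty X] (g : CVec X n → ℝ) (m : CVec X n) :
    MuHy (fun z => g (countMap n z)) m = g m := by
  unfold MuHy
  have h1 : ∑ z ∈ Finset.univ.filter (fun z : Fin n → X => countMap n z = m), g (countMap n z)
      = ∑ z ∈ Finset.univ.filter (fun z : Fin n → X => countMap n z = m), g m :=
    Finset.sum_congr rfl fun z hz => by rw [(Finset.mem_filter.mp hz).2]
  rw [h1, Finset.sum_const, card_atom m, nsmul_eq_mul]
  exact mul_div_cancel_left₀ _ (by exact_mod_cast (nu_pos m).ne')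

lemma sum_perm_muhy [Nonempty X] (f : (Fin n → X) → ℝ) (z : Fin n → X) :
    ∑ π : Equiv.Perm (Fin n), f (z ∘ π) = (n ! : ℝ) * MuHy f (countMap n z) := by
  rw [sum_perm]
  unfold MuHy
  have hspec : (∏ x, ((countMap n z).1 x)!) * nu (countMap n z) = n ! := by
    have := Nat.multinomial_spec Finset.univ (countMap n z).1
    rw [(countMap n z).2] at this
    simpa [nu] using this
  have hν : ((nu (countMap n z) : ℕ) : ℝ) ≠ 0 := by
    exact_mod_cast (nu_pos (countMap n z)).ne'
  have hcast : ((∏ x, ((countMap n z).1 x)! : ℕ) : ℝ) * (nu (countMap n z) : ℝ) = (n ! : ℝ) := by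
    exact_mod_cast congrArg (Nat.cast : ℕ → ℝ) hspec
  rw [← hcast]
  field_simp

end Aux3
section Aux4
set_option linter.unusedSectionVars false

variable {Ω : Type*} [Fintype Ω] [Nonempty Ω]

lemma E_zero {E : (Ω → ℝ) → ℝ} (hE : LowerPrevCoherent E) : E (fun _ => 0) = 0 := by
  have h := hE.2.1 (fun _ => 0) 0 le_rfl
  simpa using h

lemma E_le {E : (Ω → ℝ) → ℝ} (hE : LowerPrevCoherent E) {f : Ω → ℝ} {c : ℝ}
    (hc : ∀ ω, f ω ≤ c) : E f ≤ c := by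
  have h1 := hE.2.2 f (-f)
  have h2 : f + -f = fun _ => (0 : ℝ) := by funext ω; simp
  rw [h2, E_zero hE] at h1
  have h3 : -c ≤ E (-f) := by
    refine le_trans ?_ (hE.1 (-f))
    refine le_csInf (Set.range_nonempty _) ?_
    rintro b ⟨ω, rfl⟩
    simpa using hc ω
  linarith

lemma E_sum {E : (Ω → ℝ) → ℝ} (hE : LowerPrevCoherent E) {ι : Type*} (s : Finset ι)
    (F : ι → Ω → ℝ) : ∑ i ∈ s, E (F i) ≤ E (fun ω => ∑ i ∈ s, F i ω) := by
  classical
  induction s using Finset.cons_induction with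
  | empty => simp [E_zero hE]
  | cons a s ha ih =>
    rw [Finset.sum_cons]
    have h1 : E (F a) + ∑ i ∈ s, E (F i) ≤ E (F a) + E (fun ω => ∑ i ∈ s, F i ω) := by
      linarith
    refine h1.trans ?_
    have h2 := hE.2.2 (F a) (fun ω => ∑ i ∈ s, F i ω)
    have h3 : (F a + fun ω => ∑ i ∈ s, F i ω) = fun ω => ∑ i ∈ Finset.cons a s ha, F i ω := by
      funext ω; rw [Finset.sum_cons]; rfl
    rwa [h3] at h2

section Count
variable {X : Type*} [Fintype X] [DecidableEq X] {n : ℕ}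

lemma MuHy_zero (m : CVec X n) : MuHy (fun _ => (0:ℝ)) m = 0 := by
  unfold MuHy; simp

lemma MuHy_sum {ι : Type*} (s : Finset ι) (F : ι → (Fin n → X) → ℝ) (m : CVec X n) :
    MuHy (fun z => ∑ i ∈ s, F i z) m = ∑ i ∈ s, MuHy (F i) m := by
  classical
  induction s using Finset.cons_induction with
  | empty => simpa using MuHy_zero m
  | cons a s ha ih =>
    simp only [Finset.sum_cons]
    rw [← ih, ← MuHy_add]

variable [Nonempty X]

/-- min over count vectors -/
noncomputable def minCV (φ : CVec X n → ℝ) : ℝ :=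
  Finset.univ.inf' Finset.univ_nonempty φ

lemma minCV_le (φ : CVec X n → ℝ) (m : CVec X n) : minCV φ ≤ φ m :=
  Finset.inf'_le _ (Finset.mem_univ m)

lemma le_minCV {φ : CVec X n → ℝ} {c : ℝ} (h : ∀ m, c ≤ φ m) : c ≤ minCV φ :=
  Finset.le_inf' _ _ fun m _ => h m

lemma minCV_smul (l : ℝ) (hl : 0 ≤ l) (φ : CVec X n → ℝ) :
    minCV (fun m => l * φ m) = l * minCV φ := by
  obtain ⟨m₀, _, hm₀⟩ := Finset.exists_mem_eq_inf' (Finset.univ_nonempty (α := CVec X n)) φ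
  have hmin : minCV φ = φ m₀ := hm₀
  apply le_antisymm
  · refine le_trans (minCV_le _ m₀) ?_
    rw [hmin]
  · exact le_minCV fun m => mul_le_mul_of_nonneg_left (minCV_le φ m) hl

lemma minCV_const (c : ℝ) : minCV (fun _ : CVec X n => c) = c :=
  le_antisymm (minCV_le _ (Classical.arbitrary _)) (le_minCV fun _ => le_rfl)

lemma minCV_add_le (φ ψ : CVec X n → ℝ) :
    minCV φ + minCV ψ ≤ minCV (fun m => φ m + ψ m) :=
  le_minCV fun m => add_le_add (minCV_le φ m) (minCV_le ψ m)

end Count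
end Aux4
open Pointwise in
/-- existence of a coherent exchangeable lower prevision dominating the
assessments `P₀` on `K` is equivalent to `Q` being real-valued on `H` and avoiding
sure loss. -/
theorem stmt15 {X : Type*} [Fintype X] [DecidableEq X] [Nonempty X] {N : ℕ} (hN : 1 ≤ N)
    (K : Set ((Fin N → X) → ℝ)) (hK : K.Nonempty)
    (P0 : ((Fin N → X) → ℝ) → ℝ)
    (Q : (CVec X N → ℝ) → ℝ)
    (hQ : ∀ g : CVec X N → ℝ,
      Q g = sSup {r : ℝ | ∃ f ∈ K, (fun m => MuHy f m) = g ∧ P0 f = r}) :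
    (∃ E : ((Fin N → X) → ℝ) → ℝ,
        LowerPrevCoherent E ∧ Exchangeable E ∧ ∀ f ∈ K, P0 f ≤ E f) ↔
      ((∀ g : CVec X N → ℝ, (∃ f ∈ K, (fun m => MuHy f m) = g) →
          BddAbove {r : ℝ | ∃ f ∈ K, (fun m => MuHy f m) = g ∧ P0 f = r}) ∧
       ∀ (n : ℕ) (gs : Fin n → (CVec X N → ℝ)) (lam : Fin n → ℝ),
         (∀ i, ∃ f ∈ K, (fun m => MuHy f m) = gs i) → (∀ i, 0 ≤ lam i) →
         ∃ m : CVec X N, 0 ≤ ∑ i, lam i * (gs i m - Q (gs i))) := by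
  constructor
  · rintro ⟨E, hE, hEx, hdom⟩
    have keyle : ∀ f : (Fin N → X) → ℝ,
        E f ≤ Finset.univ.sup' Finset.univ_nonempty (fun m : CVec X N => MuHy f m) := by
      intro f
      set s : (Fin N → X) → ℝ := fun z => MuHy f (countMap N z) with hs
      have step1 : ∀ π : Equiv.Perm (Fin N), E f ≤ E (fun x => f (fun k => x (π k))) := by
        intro π
        have h0 := hEx f π
        have h2 := hE.2.2 f (fun x => f (fun k => x (π k)) - f x)
        have h3 : (f + fun x => f (fun k => x (π k)) - f x)
            = fun x => f (fun k => x (π k)) := by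
          funext x; simp
        rw [h3] at h2
        linarith
      have step2 : ((N.factorial : ℕ) : ℝ) * E f
          ≤ E (fun z => ∑ π : Equiv.Perm (Fin N), f (fun k => z (π k))) := by
        have h4 := E_sum hE Finset.univ
          (fun π : Equiv.Perm (Fin N) => fun z => f (fun k => z (π k)))
        have h5 : ((N.factorial : ℕ) : ℝ) * E f = ∑ _π : Equiv.Perm (Fin N), E f := by
          rw [Finset.sum_const, Finset.card_univ, Fintype.card_perm, Fintype.card_fin,
            nsmul_eq_mul]
        rw [h5]
        exact le_trans (Finset.sum_le_sum fun π _ => step1 π) h4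
      have step3 : (fun z => ∑ π : Equiv.Perm (Fin N), f (fun k => z (π k)))
          = fun z => ((N.factorial : ℕ) : ℝ) * s z := by
        funext z
        exact sum_perm_muhy f z
      rw [step3, hE.2.1 s ((N.factorial : ℕ) : ℝ) (Nat.cast_nonneg _)] at step2
      have hfac : (0:ℝ) < ((N.factorial : ℕ) : ℝ) := by
        exact_mod_cast N.factorial_pos
      have h6 : E f ≤ E s := le_of_mul_le_mul_left step2 hfac
      refine h6.trans (E_le hE fun z => ?_)
      exact Finset.le_sup' (fun m : CVec X N => MuHy f m) (Finset.mem_univ (countMap N z))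
    have hBdd : ∀ g : CVec X N → ℝ, (∃ f ∈ K, (fun m => MuHy f m) = g) →
        BddAbove {r : ℝ | ∃ f ∈ K, (fun m => MuHy f m) = g ∧ P0 f = r} := by
      rintro g ⟨f, hf, hfg⟩
      refine ⟨Finset.univ.sup' Finset.univ_nonempty g, ?_⟩
      rintro r ⟨f', hf', hg', rfl⟩
      have h := keyle f'
      rw [hg'] at h
      exact (hdom f' hf').trans h
    refine ⟨hBdd, ?_⟩
    intro n gs lam hgs hlam
    set Msup := Finset.univ.sup' Finset.univ_nonempty
      (fun m : CVec X N => ∑ i, lam i * gs i m) with hMsup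
    have main : ∀ ε : ℝ, 0 < ε →
        ∑ i, lam i * Q (gs i) - (∑ i, lam i) * ε ≤ Msup := by
      intro ε hε
      have choose_f : ∀ i, ∃ f ∈ K, (fun m => MuHy f m) = gs i ∧ Q (gs i) - ε < P0 f := by
        intro i
        obtain ⟨f, hf, hfg⟩ := hgs i
        have hne : {r : ℝ | ∃ f' ∈ K, (fun m => MuHy f' m) = gs i ∧ P0 f' = r}.Nonempty :=
          ⟨P0 f, f, hf, hfg, rfl⟩
        have hlt : Q (gs i) - ε
            < sSup {r : ℝ | ∃ f' ∈ K, (fun m => MuHy f' m) = gs i ∧ P0 f' = r} := by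
          rw [← hQ]; linarith
        obtain ⟨r, ⟨f', hf', hfg', rfl⟩, hr⟩ := exists_lt_of_lt_csSup hne hlt
        exact ⟨f', hf', hfg', hr⟩
      choose fs hfsK hfsg hfsP using choose_f
      set F : (Fin N → X) → ℝ := fun z => ∑ i, lam i * fs i z with hF
      have hEF_ge : ∑ i, lam i * (Q (gs i) - ε) ≤ E F := by
        have h1 := E_sum hE Finset.univ (fun i => fun z => lam i * fs i z)
        have h2 : ∀ i, lam i * (Q (gs i) - ε) ≤ E (fun z => lam i * fs i z) := by
          intro i
          rw [hE.2.1 (fs i) (lam i) (hlam i)]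
          have hd := hdom (fs i) (hfsK i)
          have h3 := hfsP i
          nlinarith [hlam i]
        calc ∑ i, lam i * (Q (gs i) - ε) ≤ ∑ i, E (fun z => lam i * fs i z) :=
              Finset.sum_le_sum fun i _ => h2 i
          _ ≤ E F := h1
      have hEF_le : E F ≤ Msup := by
        have h := keyle F
        have hfn : (fun m : CVec X N => MuHy F m) = fun m => ∑ i, lam i * gs i m := by
          funext m
          rw [hF]
          rw [MuHy_sum]
          refine Finset.sum_congr rfl fun i _ => ?_
          rw [MuHy_smul, congrFun (hfsg i) m]
        rwa [hfn] at h
      have hsplit : ∑ i, lam i * (Q (gs i) - ε)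
          = ∑ i, lam i * Q (gs i) - (∑ i, lam i) * ε := by
        rw [Finset.sum_mul]
        rw [← Finset.sum_sub_distrib]
        exact Finset.sum_congr rfl fun i _ => by ring
      linarith [hsplit ▸ hEF_ge, hEF_le]
    have hc : ∑ i, lam i * Q (gs i) ≤ Msup := by
      by_contra hcon
      push_neg at hcon
      set L := ∑ i, lam i with hL
      have hLnn : 0 ≤ L := Finset.sum_nonneg fun i _ => hlam i
      set d := ∑ i, lam i * Q (gs i) - Msup with hd
      have hdpos : 0 < d := by simp only [hd]; linarith
      have hL1 : (0:ℝ) < L + 1 := by linarith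
      have key2 := main (d / (L + 1)) (by positivity)
      have h7 : L * (d / (L + 1)) < d := by
        have : L * (d / (L + 1)) = (L * d) / (L + 1) := by ring
        rw [this, div_lt_iff₀ hL1]
        nlinarith
      try simp only [← hL, ← hd] at key2
      linarith
    obtain ⟨m₀, _, hm₀⟩ := Finset.exists_mem_eq_sup' (Finset.univ_nonempty (α := CVec X N))
      (fun m : CVec X N => ∑ i, lam i * gs i m)
    refine ⟨m₀, ?_⟩
    have hMm : Msup = ∑ i, lam i * gs i m₀ := hm₀
    have hsplit2 : ∑ i, lam i * (gs i m₀ - Q (gs i))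
        = ∑ i, lam i * gs i m₀ - ∑ i, lam i * Q (gs i) := by
      rw [← Finset.sum_sub_distrib]
      exact Finset.sum_congr rfl fun i _ => by ring
    rw [hsplit2, ← hMm]
    linarith
  · rintro ⟨hBdd, hASL⟩
    set S : ((Fin N → X) → ℝ) → Set ℝ := fun f =>
      {r | ∃ (n : ℕ) (gs : Fin n → CVec X N → ℝ) (lam : Fin n → ℝ),
        (∀ i, ∃ f' ∈ K, (fun m => MuHy f' m) = gs i) ∧ (∀ i, 0 ≤ lam i) ∧
        r = minCV (fun m => MuHy f m - ∑ i, lam i * (gs i m - Q (gs i)))} with hS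
    have hmem0 : ∀ f : (Fin N → X) → ℝ, minCV (fun m => MuHy f m) ∈ S f := by
      intro f
      refine ⟨0, Fin.elim0, Fin.elim0, fun i => i.elim0, fun i => i.elim0, ?_⟩
      congr 1
      funext m
      simp
    have hne : ∀ f : (Fin N → X) → ℝ, (S f).Nonempty := fun f => ⟨_, hmem0 f⟩
    have hub : ∀ f : (Fin N → X) → ℝ, ∀ r ∈ S f,
        r ≤ Finset.univ.sup' Finset.univ_nonempty (fun m : CVec X N => MuHy f m) := by
      rintro f r ⟨n, gs, lam, hgs, hlam, rfl⟩
      obtain ⟨m₀, hm₀⟩ := hASL n gs lam hgs hlam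
      calc minCV (fun m => MuHy f m - ∑ i, lam i * (gs i m - Q (gs i)))
          ≤ MuHy f m₀ - ∑ i, lam i * (gs i m₀ - Q (gs i)) := minCV_le _ m₀
        _ ≤ MuHy f m₀ := by linarith
        _ ≤ _ := Finset.le_sup' (fun m : CVec X N => MuHy f m) (Finset.mem_univ m₀)
    have hbdd : ∀ f : (Fin N → X) → ℝ, BddAbove (S f) :=
      fun f => ⟨_, fun r hr => hub f r hr⟩
    refine ⟨fun f => sSup (S f), ⟨?_, ?_, ?_⟩, ?_, ?_⟩
    · -- sInf range f ≤ E f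
      intro f
      have h1 : sInf (Set.range f) ≤ minCV (fun m => MuHy f m) := by
        refine le_minCV fun m => le_MuHy f m fun z => ?_
        exact csInf_le (Set.Finite.bddBelow (Set.finite_range f)) ⟨z, rfl⟩
      exact h1.trans (le_csSup (hbdd f) (hmem0 f))
    · -- homogeneity
      intro f l hl
      show sSup (S (fun ω => l * f ω)) = l * sSup (S f)
      rcases eq_or_lt_of_le hl with heq | hpos
      · -- l = 0
        have hzero : ∀ r ∈ S (fun ω => l * f ω), r ≤ 0 := by
          rintro r ⟨n, gs, lam, hgs, hlam, rfl⟩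
          obtain ⟨m₀, hm₀⟩ := hASL n gs lam hgs hlam
          have hval : MuHy (fun z => l * f z) m₀ = 0 := by
            rw [MuHy_smul, ← heq]; ring
          calc minCV (fun m => MuHy (fun ω => l * f ω) m - ∑ i, lam i * (gs i m - Q (gs i)))
              ≤ MuHy (fun ω => l * f ω) m₀ - ∑ i, lam i * (gs i m₀ - Q (gs i)) := minCV_le _ m₀
            _ ≤ 0 := by rw [hval]; linarith
        have h0mem : (0:ℝ) ∈ S (fun ω => l * f ω) := by
          have hm := hmem0 (fun ω => l * f ω)
          have hfn : (fun m : CVec X N => MuHy (fun ω => l * f ω) m) = fun _ => (0:ℝ) := by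
            funext m; rw [MuHy_smul, ← heq]; ring
          rwa [hfn, minCV_const] at hm
        have hsup0 : sSup (S (fun ω => l * f ω)) = 0 :=
          le_antisymm (csSup_le (hne _) hzero) (le_csSup (hbdd _) h0mem)
        rw [hsup0, ← heq]; ring
      · -- l > 0
        have himg : S (fun ω => l * f ω) = (fun r => l * r) '' S f := by
          ext r
          constructor
          · rintro ⟨n, gs, lam, hgs, hlam, rfl⟩
            refine ⟨minCV (fun m => MuHy f m - ∑ i, (lam i / l) * (gs i m - Q (gs i))),
              ⟨n, gs, fun i => lam i / l, hgs,
                fun i => div_nonneg (hlam i) hpos.le, rfl⟩, ?_⟩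
            have heq1 : l * minCV (fun m => MuHy f m - ∑ i, (lam i / l) * (gs i m - Q (gs i)))
                = minCV (fun m => MuHy (fun ω => l * f ω) m
                    - ∑ i, lam i * (gs i m - Q (gs i))) := by
              rw [← minCV_smul l hpos.le]
              congr 1
              funext m
              rw [MuHy_smul, mul_sub, Finset.mul_sum]
              congr 1
              refine Finset.sum_congr rfl fun i _ => ?_
              field_simp
            exact heq1
          · rintro ⟨r', ⟨n, gs, lam, hgs, hlam, rfl⟩, rfl⟩
            refine ⟨n, gs, fun i => l * lam i, hgs,
              fun i => mul_nonneg hpos.le (hlam i), ?_⟩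
            have heq1 : l * minCV (fun m => MuHy f m - ∑ i, lam i * (gs i m - Q (gs i)))
                = minCV (fun m => MuHy (fun ω => l * f ω) m
                    - ∑ i, (l * lam i) * (gs i m - Q (gs i))) := by
              rw [← minCV_smul l hpos.le]
              congr 1
              funext m
              rw [MuHy_smul, mul_sub, Finset.mul_sum]
              congr 1
              refine Finset.sum_congr rfl fun i _ => ?_
              ring
            exact heq1
        have himg2 : (fun r => l * r) '' S f = l • S f := by
          ext r
          simp [Set.mem_smul_set, smul_eq_mul]
        rw [himg, himg2, Real.sSup_smul_of_nonneg hl, smul_eq_mul]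
    · -- superadditivity
      intro f g
      show sSup (S f) + sSup (S g) ≤ sSup (S (f + g))
      have key : ∀ r ∈ S f, ∀ r' ∈ S g, r + r' ≤ sSup (S (f + g)) := by
        rintro r ⟨n1, gs1, lam1, hgs1, hlam1, rfl⟩ r' ⟨n2, gs2, lam2, hgs2, hlam2, rfl⟩
        have hmem : minCV (fun m => MuHy (f + g) m
            - ∑ i, Fin.append lam1 lam2 i * (Fin.append gs1 gs2 i m - Q (Fin.append gs1 gs2 i)))
            ∈ S (f + g) := by
          refine ⟨n1 + n2, Fin.append gs1 gs2, Fin.append lam1 lam2, ?_, ?_, rfl⟩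
          · intro i
            refine Fin.addCases (fun j => ?_) (fun j => ?_) i
            · rw [Fin.append_left]; exact hgs1 j
            · rw [Fin.append_right]; exact hgs2 j
          · intro i
            refine Fin.addCases (fun j => ?_) (fun j => ?_) i
            · rw [Fin.append_left]; exact hlam1 j
            · rw [Fin.append_right]; exact hlam2 j
        refine le_trans ?_ (le_csSup (hbdd _) hmem)
        refine le_trans (minCV_add_le _ _) (le_of_eq ?_)
        congr 1
        funext m
        have hM : MuHy (f + g) m = MuHy f m + MuHy g m := MuHy_add f g m
        rw [hM, Fin.sum_univ_add]
        simp only [Fin.append_left, Fin.append_right]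
        ring
      have h1 : ∀ r ∈ S f, r + sSup (S g) ≤ sSup (S (f + g)) := by
        intro r hr
        have h2 : sSup (S g) ≤ sSup (S (f + g)) - r :=
          csSup_le (hne g) fun r' hr' => by linarith [key r hr r' hr']
        linarith
      have h3 : sSup (S f) ≤ sSup (S (f + g)) - sSup (S g) :=
        csSup_le (hne f) fun r hr => by linarith [h1 r hr]
      linarith
    · -- exchangeable
      intro f π
      show (0:ℝ) ≤ sSup (S (fun x => f (fun k => x (π k)) - f x))
      have hfn : (fun m : CVec X N => MuHy (fun x => f (fun k => x (π k)) - f x) m)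
          = fun _ => (0:ℝ) := by
        funext m
        have hd : MuHy (fun x => f (fun k => x (π k)) - f x) m
            = MuHy (fun x => f (fun k => x (π k))) m - MuHy f m :=
          MuHy_sub _ _ m
        rw [hd, MuHy_perm]
        ring
      have h0 : (0:ℝ) ∈ S (fun x => f (fun k => x (π k)) - f x) := by
        have hm := hmem0 (fun x => f (fun k => x (π k)) - f x)
        rwa [hfn, minCV_const] at hm
      exact le_csSup (hbdd _) h0
    · -- dominates P0
      intro f hf
      show P0 f ≤ sSup (S f)
      have hmem1 : Q (fun m => MuHy f m) ∈ S f := by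
        refine ⟨1, fun _ => (fun m => MuHy f m), fun _ => 1,
          fun i => ⟨f, hf, rfl⟩, fun i => zero_le_one, ?_⟩
        have hfn : (fun m => MuHy f m
            - ∑ _i : Fin 1, (1:ℝ) * (MuHy f m - Q (fun m' => MuHy f m'))) =
            fun _ : CVec X N => Q (fun m' => MuHy f m') := by
          funext m
          simp
        rw [hfn, minCV_const]
      have hPQ : P0 f ≤ Q (fun m => MuHy f m) := by
        rw [hQ (fun m => MuHy f m)]
        exact le_csSup (hBdd (fun m => MuHy f m) ⟨f, hf, rfl⟩) ⟨f, hf, rfl, rfl⟩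
      exact hPQ.trans (le_csSup (hbdd f) hmem1)
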